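/- Let f be continuous on [a,c], differentiable on (a,c) with f'(x) ≥ -1 for all x in (a,c), f(x) > x for all x in [a,c), and c the unique fixed point of f in [a,c]. Then for any x₀ ∈ [a,c), the sequence defined by x_{n+1} = (x_n + f(x_n))/2 converges to c. -/

import Mathlib

theorem stmt0 (f : ℝ → ℝ) (a c : ℝ) (hac : a < c)
    (hcont : ContinuousOn f (Set.Icc a c))
    (hdiff : ∀ x ∈ Set.Ioo a c, DifferentiableAt ℝ f x)
    (hderiv : ∀ x ∈ Set.Ioo a c, -1 ≤ deriv f x)
    (hgt : ∀ x ∈ Set.Ico a c, f x > x)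
    (hfix : f c = c)
    (huniq : ∀ x ∈ Set.Icc a c, f x = x → x = c)
    (x : ℕ → ℝ) (hx0 : x 0 ∈ Set.Ico a c)
    (hrec : ∀ n, x (n + 1) = (x n + f (x n)) / 2) :
    Filter.Tendsto x Filter.atTop (nhds c) := by
  have key : ∀ t ∈ Set.Ico a c, f t ≤ 2*c - t := by
    intro t ht
    have hmono : MonotoneOn (fun s => f s + s) (Set.Icc a c) := by
      apply monotoneOn_of_deriv_nonneg (convex_Icc a c)
      · exact hcont.add continuousOn_id
      · intro s hs
        rw [interior_Icc] at hs
        exact ((hdiff s hs).add differentiableAt_id).differentiableWithinAt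
      · intro s hs
        rw [interior_Icc] at hs
        have hd := ((hdiff s hs).hasDerivAt.add (hasDerivAt_id s)).deriv
        change deriv (fun s => f s + s) s = _ at hd
        rw [hd]
        linarith [hderiv s hs]
    have := hmono ⟨ht.1, ht.2.le⟩ (Set.right_mem_Icc.mpr hac.le) ht.2.le
    simp only [hfix] at this
    linarith
  have hmem : ∀ n, x n ∈ Set.Icc a c := by
    intro n
    induction n with
    | zero => exact ⟨hx0.1, hx0.2.le⟩
    | succ k ih =>
      rw [hrec]
      rcases eq_or_lt_of_le ih.2 with h | h
      · rw [h, hfix]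
        exact ⟨by linarith, by linarith⟩
      · have h1 := hgt (x k) ⟨ih.1, h⟩
        have h2 := key (x k) ⟨ih.1, h⟩
        exact ⟨by linarith [ih.1], by linarith⟩
  have hmono : Monotone x := monotone_nat_of_le_succ (fun n => by
    rw [hrec]
    rcases eq_or_lt_of_le (hmem n).2 with h | h
    · rw [h, hfix]; linarith
    · have := hgt (x n) ⟨(hmem n).1, h⟩; linarith)
  have hbdd : BddAbove (Set.range x) := ⟨c, by rintro _ ⟨n, rfl⟩; exact (hmem n).2⟩
  have hlim : Filter.Tendsto x Filter.atTop (nhds (⨆ n, x n)) :=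
    tendsto_atTop_ciSup hmono hbdd
  set L := ⨆ n, x n with hL
  have hLmem : L ∈ Set.Icc a c :=
    ⟨le_trans (hmem 0).1 (le_ciSup hbdd 0), ciSup_le fun n => (hmem n).2⟩
  have hfl : Filter.Tendsto (fun n => f (x n)) Filter.atTop (nhds (f L)) := by
    have hc := hcont L hLmem
    exact hc.tendsto.comp (tendsto_nhdsWithin_iff.mpr
      ⟨hlim, Filter.Eventually.of_forall hmem⟩)
  have h1 : Filter.Tendsto (fun n => x (n+1)) Filter.atTop (nhds L) :=
    hlim.comp (Filter.tendsto_add_atTop_nat 1)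
  have h2 : Filter.Tendsto (fun n => x (n+1)) Filter.atTop (nhds ((L + f L)/2)) := by
    simp only [hrec]
    exact (hlim.add hfl).div_const 2
  have hLc : L = c := huniq L hLmem (by have := tendsto_nhds_unique h1 h2; linarith)
  exact hLc ▸ hlim
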